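/- arXiv:2010.11597 — 2 statements merged into one kernel-verified Lean document; each statement's English description precedes it below -/
import Mathlib

section
/- Let κ be a regular cardinal such that λ^ω < κ for every cardinal λ < κ. Then every locally coherent κ-Kurepa subtree of ^{<κ}κ is superthin. -/
open Cardinal Set

noncomputable section

namespace GBaire

universe u

/-- The underlying well-ordered set of the cardinal `κ`, i.e. the type of ordinals `< κ`. -/
abbrev K (κ : Cardinal.{u}) : Type u := κ.ord.ToType

/-- The set `^{<κ}κ` of all functions from a proper initial segment of `κ` to `κ`. -/
abbrev PreFun (κ : Cardinal.{u}) : Type u := Σ α : K κ, ({β : K κ // β < α} → K κ)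

variable (κ : Cardinal.{u})

/-- The restriction `x ↾ α` of a function `x ∈ ^κκ` to the initial segment determined by `α`. -/
def resT (x : K κ → K κ) (α : K κ) : PreFun κ := ⟨α, fun β => x β.1⟩

/-- The restriction of `s ∈ ^{<κ}κ` to (the minimum of its domain and) `γ`.  When
`γ ≤ s.1` this is the restriction `s ↾ γ`; otherwise it equals `s`. -/
def cut (s : PreFun κ) (γ : K κ) : PreFun κ :=
  ⟨min γ s.1, fun β => s.2 ⟨β.1, lt_of_lt_of_le β.2 (min_le_right _ _)⟩⟩

/-- A subtree of `^{<κ}κ`: a set of elements of `^{<κ}κ` closed under restrictions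
to smaller ordinals. -/
def IsSubtree (T : Set (PreFun κ)) : Prop :=
  ∀ s ∈ T, ∀ γ : K κ, γ < s.1 → cut κ s γ ∈ T

/-- The `α`-th level `T(α)` of `T`. -/
def level (T : Set (PreFun κ)) (α : K κ) : Set (PreFun κ) := {s ∈ T | s.1 = α}

/-- The set `[T]` of cofinal branches of `T`, i.e. all `x ∈ ^κκ` all of whose
restrictions lie in `T`. -/
def branches (T : Set (PreFun κ)) : Set (K κ → K κ) := {x | ∀ α : K κ, resT κ x α ∈ T}

/-- `T` is a `κ`-Kurepa subtree of `^{<κ}κ`: a subtree all of whose levels are nonempty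
of cardinality `< κ` and with at least `κ⁺` many cofinal branches. -/
def IsKurepa (T : Set (PreFun κ)) : Prop :=
  IsSubtree κ T ∧ (∀ α : K κ, (level κ T α).Nonempty ∧ #(level κ T α) < κ) ∧
    Order.succ κ ≤ #(branches κ T)

/-- The basic open set `N_s = {x ∈ ^κκ | s ⊆ x}`. -/
def Nbhd (s : PreFun κ) : Set (K κ → K κ) := {x | resT κ x s.1 = s}

/-- The topology of the generalized Baire space `^κκ`, generated by the sets `N_s`. -/
def baire : TopologicalSpace (K κ → K κ) :=
  TopologicalSpace.generateFrom {U | ∃ s : PreFun κ, U = Nbhd κ s}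

/-- `X` is a continuous image of `^κκ`: there is a continuous surjection from `^κκ`
onto `X` (with the subspace topology). -/
def IsContImage (X : Set (K κ → K κ)) : Prop :=
  letI := baire κ
  ∃ f : (K κ → K κ) → X, Continuous f ∧ Function.Surjective f

/-- `X` is a retract of `^κκ`: there is a continuous `r : ^κκ → ^κκ` with range
contained in `X` that is the identity on `X`. -/
def IsRetract (X : Set (K κ → K κ)) : Prop :=
  letI := baire κ
  ∃ r : (K κ → K κ) → (K κ → K κ),
    Continuous r ∧ Set.range r ⊆ X ∧ ∀ x ∈ X, r x = x

/-- `y` is an isolated point of `Y ⊆ ^κκ`. -/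
def IsIsolatedIn (Y : Set (K κ → K κ)) (y : K κ → K κ) : Prop :=
  y ∈ Y ∧ ∃ α : K κ, Nbhd κ (resT κ y α) ∩ Y = {y}

/-- `T` is slim: `|T(α)| ≤ |α|` for all sufficiently large `α < κ`. -/
def IsSlim (T : Set (PreFun κ)) : Prop :=
  ∃ α₀ : K κ, ∀ α : K κ, α₀ ≤ α → #(level κ T α) ≤ #{β : K κ // β < α}

/-- `C ⊆ κ` is closed: it contains every least upper bound of a nonempty subset of `C`. -/
def ClosedIn (C : Set (K κ)) : Prop :=
  ∀ A ⊆ C, A.Nonempty → ∀ x : K κ, IsLUB A x → x ∈ C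

/-- `C ⊆ κ` is unbounded in `κ`. -/
def UnboundedIn (C : Set (K κ)) : Prop := ∀ x : K κ, ∃ y ∈ C, x < y

/-- `S ⊆ κ` is stationary in `κ`: it meets every closed unbounded subset of `κ`. -/
def Stationary (S : Set (K κ)) : Prop :=
  ∀ C : Set (K κ), ClosedIn κ C → UnboundedIn κ C → (S ∩ C).Nonempty

/-- `T` is stationary slim: `|T(α)| ≤ |α|` for stationarily many `α < κ`. -/
def StatSlim (T : Set (PreFun κ)) : Prop :=
  Stationary κ {α : K κ | #(level κ T α) ≤ #{β : K κ // β < α}}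

/-- `α` is a limit ordinal (as an element of `κ`): it is neither the least element
nor a successor. -/
def IsLimitElt (α : K κ) : Prop :=
  (∃ β : K κ, β < α) ∧ ∀ β : K κ, β < α → ∃ γ : K κ, β < γ ∧ γ < α

/-- The boundary `∂T` of a subtree `T`: the minimal elements of `^{<κ}κ \ T`. -/
def boundary (T : Set (PreFun κ)) : Set (PreFun κ) :=
  {t | t ∉ T ∧ ∀ γ : K κ, γ < t.1 → cut κ t γ ∈ T}

/-- `T` is superthin: for every limit ordinal `α < κ`, the set of elements of
`T ∪ ∂T` with domain `α` has cardinality `< κ`. -/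
def IsSuperthin (T : Set (PreFun κ)) : Prop :=
  ∀ α : K κ, IsLimitElt κ α → #{s ∈ T ∪ boundary κ T | s.1 = α} < κ

/-- `T` is pruned: every element of `T` has a proper extension in `T`. -/
def IsPruned (T : Set (PreFun κ)) : Prop :=
  ∀ s ∈ T, ∃ t ∈ T, s.1 < t.1 ∧ cut κ t s.1 = s

/-- `T` is `<κ`-closed: the union of every (strictly increasing with respect to proper
end-extension) sequence of elements of `T` indexed by an ordinal `< κ` again lies in `T`.
Here `u` is the union of the sequence `s` iff the domain of `u` is the least upper bound
of the domains of the `s ξ` and every `s ξ` is a restriction of `u`. -/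
def IsLtClosed (T : Set (PreFun κ)) : Prop :=
  ∀ (γ : K κ) (s : {ξ : K κ // ξ < γ} → PreFun κ),
    (∀ ξ ζ : {ξ : K κ // ξ < γ}, ξ < ζ → (s ξ).1 < (s ζ).1 ∧ cut κ (s ζ) (s ξ).1 = s ξ) →
    (∀ ξ, s ξ ∈ T) →
    ∀ u : PreFun κ, IsLUB (Set.range fun ξ => (s ξ).1) u.1 →
      (∀ ξ, cut κ u (s ξ).1 = s ξ) → u ∈ T

/-- `T` contains a Cantor subtree. -/
def HasCantorSubtree (T : Set (PreFun κ)) : Prop :=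
  ∃ (l : ℕ → K κ) (lam : K κ), StrictMono l ∧ IsLUB (Set.range l) lam ∧
    (level κ T lam).Nonempty ∧
    ∃ B ⊆ level κ T lam, ¬ B.Countable ∧
      ∀ n : ℕ, ((fun t => cut κ t (l n)) '' B).Countable

/-- proper end-extension on `^{<κ}κ`. -/
def pext (s t : PreFun κ) : Prop := s.1 < t.1 ∧ cut κ t s.1 = s

/-- A set `A ⊆ ^{<κ}κ`, regarded as a tree under proper end-extension, is trivially
coherent: it is order-isomorphic to a subtree of `^{<λ}2` (for `λ` its height) all of
whose elements `t` satisfy that `t⁻¹{0}` is finite.  (Here the comparison tree is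
realized as a subtree `U` of `^{<κ}κ` taking only the values `0` and `1`, i.e. values
with at most one predecessor, such that each `u ∈ U` takes the value `0`, i.e. the
value with no predecessor, only finitely often.) -/
def TriviallyCoherent (A : Set (PreFun κ)) : Prop :=
  ∃ U : Set (PreFun κ),
    IsSubtree κ U ∧
    (∀ u ∈ U, ∀ β : {b : K κ // b < u.1}, #{γ : K κ // γ < u.2 β} ≤ 1) ∧
    (∀ u ∈ U, {β : {b : K κ // b < u.1} | ¬ ∃ γ : K κ, γ < u.2 β}.Finite) ∧
    ∃ f : A → U, Function.Bijective f ∧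
      ∀ s t : A, pext κ s.1 t.1 ↔ pext κ (f s).1 (f t).1

/-- `T` is locally coherent: each of its proper initial segments `T ∩ ^{<α}κ` is
trivially coherent. -/
def LocallyCoherent (T : Set (PreFun κ)) : Prop :=
  ∀ α : K κ, TriviallyCoherent κ {s ∈ T | s.1 < α}

end GBaire

namespace GBaire


variable {κ : Cardinal.{u}}

lemma preFun_ext {s t : PreFun κ} (h1 : s.1 = t.1)
    (h2 : ∀ β (hβ : β < s.1) (hβ' : β < t.1), s.2 ⟨β, hβ⟩ = t.2 ⟨β, hβ'⟩) : s = t := by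
  obtain ⟨a, f⟩ := s
  obtain ⟨b, g⟩ := t
  dsimp at h1
  subst h1
  have : f = g := funext fun β => h2 β.1 β.2 β.2
  rw [this]

lemma preFun_val_congr {s t : PreFun κ} (h : s = t) {β : K κ} (hβ : β < s.1) (hβ' : β < t.1) :
    s.2 ⟨β, hβ⟩ = t.2 ⟨β, hβ'⟩ := by subst h; rfl

lemma cut_fst (s : PreFun κ) (γ : K κ) : (cut κ s γ).1 = min γ s.1 := rfl

lemma cut_fst_of_le (s : PreFun κ) {γ : K κ} (h : γ ≤ s.1) : (cut κ s γ).1 = γ :=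
  min_eq_left h

lemma cut_cut (s : PreFun κ) (γ γ' : K κ) :
    cut κ (cut κ s γ') γ = cut κ s (min γ γ') := by
  apply preFun_ext
  · show min γ (min γ' s.1) = min (min γ γ') s.1
    rw [min_assoc]
  · intro β hβ hβ'
    rfl

lemma pext_cut (t : PreFun κ) {γ : K κ} (h : γ < t.1) : pext κ (cut κ t γ) t := by
  constructor
  · rw [cut_fst_of_le t h.le]; exact h
  · rw [cut_fst_of_le t h.le]

lemma pext_cut_cut (s : PreFun κ) {γ β : K κ} (h1 : γ < β) (h2 : β ≤ s.1) :
    pext κ (cut κ s γ) (cut κ s β) := by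
  constructor
  · rw [cut_fst_of_le s (h1.le.trans h2), cut_fst_of_le s h2]; exact h1
  · rw [cut_fst_of_le s (h1.le.trans h2), cut_cut, min_eq_left h1.le]

/-- Let `κ` be a regular cardinal with `λ^ω < κ` for every cardinal
`λ < κ`.  Then every locally coherent `κ`-Kurepa subtree of `^{<κ}κ` is superthin. -/
theorem superthin_of_locallyCoherent
    (κ : Cardinal.{u}) (hreg : κ.IsRegular)
    (hpow : ∀ lam : Cardinal.{u}, lam < κ → lam ^ ℵ₀ < κ)
    (T : Set (PreFun κ)) (hT : IsKurepa κ T) (hlc : LocallyCoherent κ T) :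
    IsSuperthin κ T := by
  classical
  have h2k : (2 : Cardinal.{u}) < κ :=
    lt_of_lt_of_le (by exact_mod_cast Cardinal.nat_lt_aleph0 2) hreg.aleph0_le
  have haleph : (ℵ₀ : Cardinal.{u}) < κ := (Cardinal.cantor ℵ₀).trans (hpow 2 h2k)
  obtain ⟨hsub, -, -⟩ := hT
  intro α hα
  set S : Set (PreFun κ) := {s ∈ T ∪ boundary κ T | s.1 = α} with hS_def
  set Kα := {β : K κ // β < α} with hKα_def
  have hSdom : ∀ s : ↥S, s.1.1 = α := fun s => s.2.2
  have hcutT : ∀ (s : ↥S) (γ : K κ), γ < α → cut κ s.1 γ ∈ T := by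
    rintro ⟨s, hs | hs, hdom⟩ γ hγ
    · exact hsub s hs γ (by rw [hdom]; exact hγ)
    · exact hs.2 γ (by rw [hdom]; exact hγ)
  obtain ⟨U, hUsub, hUval, hUfin, f, hfbij, hfpext⟩ := hlc α
  have hmemA : ∀ (s : ↥S) {γ : K κ}, γ < α → cut κ s.1 γ ∈ {t ∈ T | t.1 < α} := by
    intro s γ hγ
    refine ⟨hcutT s γ hγ, ?_⟩
    rw [cut_fst_of_le _ (by rw [hSdom s]; exact hγ.le)]
    exact hγ
  set cA : ∀ (s : ↥S) (β : K κ), β < α → ↥{t ∈ T | t.1 < α} :=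
    fun s β hβ => ⟨cut κ s.1 β, hmemA s hβ⟩ with hcA_def
  have hcAfst : ∀ (s : ↥S) (β : K κ) (hβ : β < α), (cA s β hβ).1.1 = β := by
    intro s β hβ
    exact cut_fst_of_le _ (by rw [hSdom s]; exact hβ.le)
  -- the comparison tree is "level-preserving": the domain of `f (s ↾ β)` is `β`
  have hdomf : ∀ (s : ↥S) (β : K κ) (hβ : β < α), (f (cA s β hβ)).1.1 = β := by
    intro s β
    induction β using WellFoundedLT.induction with
    | ind β IH =>
      intro hβ
      have hb : ∀ γ : K κ, γ < β → γ < (f (cA s β hβ)).1.1 := by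
        intro γ hγ
        have hγα : γ < α := hγ.trans hβ
        have hp : pext κ (cA s γ hγα).1 (cA s β hβ).1 :=
          pext_cut_cut s.1 hγ (by rw [hSdom s]; exact hβ.le)
        have h2 := ((hfpext _ _).1 hp).1
        rwa [IH γ hγ hγα] at h2
      have ha : ∀ γ' : K κ, γ' < (f (cA s β hβ)).1.1 → γ' < β := by
        intro γ' hγ'
        have hcu : cut κ (f (cA s β hβ)).1 γ' ∈ U :=
          hUsub _ (f (cA s β hβ)).2 γ' hγ'
        obtain ⟨y, hy⟩ := hfbij.2 ⟨_, hcu⟩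
        have hpy : pext κ y.1 (cA s β hβ).1 := by
          refine (hfpext _ _).2 ?_
          rw [hy]
          exact pext_cut _ hγ'
        obtain ⟨hlt, hceq⟩ := hpy
        have hltβ : y.1.1 < β := by
          rwa [hcAfst s β hβ] at hlt
        have hyval : y.1 = cut κ s.1 y.1.1 := by
          have h3 : cut κ (cut κ s.1 β) y.1.1 = y.1 := hceq
          rw [cut_cut, min_eq_left hltβ.le] at h3
          exact h3.symm
        have hyA : y = cA s y.1.1 (hltβ.trans hβ) := Subtype.ext hyval
        have h4 : (f y).1.1 = y.1.1 := by
          conv_lhs => rw [hyA]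
          exact IH y.1.1 hltβ (hltβ.trans hβ)
        have h5 : (f y).1.1 = γ' := by
          rw [hy]
          exact cut_fst_of_le _ hγ'.le
        exact (h4.symm.trans h5) ▸ hltβ
      rcases lt_trichotomy (f (cA s β hβ)).1.1 β with h | h | h
      · exact absurd (hb _ h) (lt_irrefl _)
      · exact h
      · exact absurd (ha _ h) (lt_irrefl _)
  -- coherence of the images of the restrictions of a fixed `s`
  have hcoh : ∀ (s : ↥S) (β β' : K κ) (hβ : β < β') (hβ' : β' < α),
      (f (cA s β (hβ.trans hβ'))).1 = cut κ (f (cA s β' hβ')).1 β := by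
    intro s β β' hβ hβ'
    have hp : pext κ (cA s β (hβ.trans hβ')).1 (cA s β' hβ').1 :=
      pext_cut_cut s.1 hβ (by rw [hSdom s]; exact hβ'.le)
    obtain ⟨h2a, h2b⟩ := (hfpext _ _).1 hp
    rw [hdomf s β (hβ.trans hβ')] at h2b
    exact h2b.symm
  have hnxt' : ∀ β : Kα, ∃ γ : K κ, β.1 < γ ∧ γ < α := fun β => hα.2 β.1 β.2
  choose nxt hnxt1 hnxt2 using hnxt'
  -- the "union" of the branch through `U` induced by `s`
  set hfun : ↥S → Kα → K κ := fun s β =>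
    (f (cA s (nxt β) (hnxt2 β))).1.2
      ⟨β.1, by rw [hdomf s (nxt β) (hnxt2 β)]; exact hnxt1 β⟩ with hfun_def
  have hwd : ∀ (s : ↥S) (β : Kα) (β' : K κ) (h1 : β.1 < β') (h2 : β' < α)
      (hd : β.1 < (f (cA s β' h2)).1.1),
      hfun s β = (f (cA s β' h2)).1.2 ⟨β.1, hd⟩ := by
    intro s β β' h1 h2 hd
    obtain ⟨β'', hβ''1, hβ''2⟩ := hα.2 (max (nxt β) β') (max_lt (hnxt2 β) h2)
    have hnb : nxt β < β'' := (le_max_left _ _).trans_lt hβ''1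
    have hb' : β' < β'' := (le_max_right _ _).trans_lt hβ''1
    have key : ∀ (γ : K κ) (hγ : β.1 < γ) (hγα : γ < α) (hγβ'' : γ < β'')
        (hd' : β.1 < (f (cA s γ hγα)).1.1),
        (f (cA s γ hγα)).1.2 ⟨β.1, hd'⟩
          = (f (cA s β'' hβ''2)).1.2
              ⟨β.1, by rw [hdomf s β'' hβ''2]; exact hγ.trans hγβ''⟩ := by
      intro γ hγ hγα hγβ'' hd'
      have e : (f (cA s γ hγα)).1 = cut κ (f (cA s β'' hβ''2)).1 γ :=
        hcoh s γ β'' hγβ'' hβ''2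
      have hb : β.1 < (cut κ (f (cA s β'' hβ''2)).1 γ).1 := by rw [← e]; exact hd'
      have step1 : (f (cA s γ hγα)).1.2 ⟨β.1, hd'⟩
          = (cut κ (f (cA s β'' hβ''2)).1 γ).2 ⟨β.1, hb⟩ :=
        preFun_val_congr e hd' hb
      rw [step1]
      rfl
    have k1 := key (nxt β) (hnxt1 β) (hnxt2 β) hnb
      (by rw [hdomf s (nxt β) (hnxt2 β)]; exact hnxt1 β)
    have k2 := key β' h1 h2 hb' hd
    exact k1.trans k2.symm
  -- the set of "zero" values of the union function
  set Z : ↥S → Set Kα := fun s => {β : Kα | ¬∃ γ : K κ, γ < hfun s β} with hZ_def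
  have hZfin : ∀ (s : ↥S) (β' : K κ) (hβ' : β' < α),
      {β : Kα | β ∈ Z s ∧ β.1 < β'}.Finite := by
    intro s β' hβ'
    have hf : {δ : {b : K κ // b < (f (cA s β' hβ')).1.1} |
        ¬∃ γ : K κ, γ < (f (cA s β' hβ')).1.2 δ}.Finite :=
      hUfin (f (cA s β' hβ')).1 (f (cA s β' hβ')).2
    rw [← Set.finite_coe_iff] at hf ⊢
    have : Finite ↥{δ : {b : K κ // b < (f (cA s β' hβ')).1.1} |
        ¬∃ γ : K κ, γ < (f (cA s β' hβ')).1.2 δ} := hf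
    refine Finite.of_injective (fun b =>
      (⟨⟨b.1.1, by rw [hdomf s β' hβ']; exact b.2.2⟩,
        fun hex => b.2.1 (hex.imp fun γ hγ => by
          rw [hwd s b.1 β' b.2.2 hβ' (by rw [hdomf s β' hβ']; exact b.2.2)]
          exact hγ)⟩ :
        ↥{δ : {b : K κ // b < (f (cA s β' hβ')).1.1} |
          ¬∃ γ : K κ, γ < (f (cA s β' hβ')).1.2 δ})) ?_
    intro b1 b2 h
    apply Subtype.ext
    apply Subtype.ext
    exact congrArg (fun z => z.1.1) h
  have hZcnt : ∀ s : ↥S, (Z s).Countable := by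
    intro s
    rw [Set.countable_iff_exists_injective]
    refine ⟨fun z => ({β : Kα | β ∈ Z s ∧ β.1 < z.1.1}).ncard, ?_⟩
    have mono : ∀ z1 z2 : ↥(Z s), z1.1.1 < z2.1.1 →
        ({β : Kα | β ∈ Z s ∧ β.1 < z1.1.1}).ncard
          < ({β : Kα | β ∈ Z s ∧ β.1 < z2.1.1}).ncard := by
      intro z1 z2 h
      have hsubset : {β : Kα | β ∈ Z s ∧ β.1 < z1.1.1} ⊆ {β : Kα | β ∈ Z s ∧ β.1 < z2.1.1} :=
        fun β hβ => ⟨hβ.1, hβ.2.trans h⟩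
      refine Set.ncard_lt_ncard ?_ (hZfin s z2.1.1 z2.1.2)
      refine (Set.ssubset_iff_of_subset hsubset).mpr ⟨z1.1, ⟨z1.2, h⟩, fun hc => ?_⟩
      exact absurd hc.2 (lt_irrefl _)
    intro z1 z2 h
    by_contra hne
    have hne' : z1.1.1 ≠ z2.1.1 := fun he => hne (Subtype.ext (Subtype.ext he))
    rcases hne'.lt_or_gt with hlt | hlt
    · exact absurd h (ne_of_lt (mono _ _ hlt))
    · exact absurd h.symm (ne_of_lt (mono _ _ hlt))
  have henc : ∀ s : ↥S, ∃ g : ℕ → Option Kα, Z s = {β : Kα | ∃ n, g n = some β} := by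
    intro s
    rcases (Z s).eq_empty_or_nonempty with he | hne
    · refine ⟨fun _ => none, ?_⟩
      rw [he]
      ext β
      simp
    · obtain ⟨g0, hg0⟩ := (hZcnt s).exists_eq_range hne
      refine ⟨fun n => some (g0 n), ?_⟩
      rw [hg0]
      ext β
      simp [Set.mem_range, eq_comm]
  choose G hG using henc
  have hGinj : Function.Injective G := by
    intro s t hst
    have hZst : Z s = Z t := by rw [hG s, hG t, hst]
    have hhf : ∀ β : Kα, hfun s β = hfun t β := by
      intro β
      have hles : #{γ : K κ // γ < hfun s β} ≤ 1 :=
        hUval (f (cA s (nxt β) (hnxt2 β))).1 (f (cA s (nxt β) (hnxt2 β))).2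
          ⟨β.1, by rw [hdomf s (nxt β) (hnxt2 β)]; exact hnxt1 β⟩
      have hlet : #{γ : K κ // γ < hfun t β} ≤ 1 :=
        hUval (f (cA t (nxt β) (hnxt2 β))).1 (f (cA t (nxt β) (hnxt2 β))).2
          ⟨β.1, by rw [hdomf t (nxt β) (hnxt2 β)]; exact hnxt1 β⟩
      by_cases hmem : β ∈ Z s
      · have hmem' : β ∈ Z t := hZst ▸ hmem
        by_contra hne
        rcases (Ne.lt_or_gt hne) with hlt | hlt
        · exact hmem' ⟨hfun s β, hlt⟩
        · exact hmem ⟨hfun t β, hlt⟩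
      · have hmem' : β ∉ Z t := fun hc => hmem (hZst ▸ hc)
        have hexs : ∃ γ : K κ, γ < hfun s β := not_not.mp hmem
        have hext : ∃ γ : K κ, γ < hfun t β := not_not.mp hmem'
        obtain ⟨γ1, hγ1⟩ := hexs
        obtain ⟨γ2, hγ2⟩ := hext
        by_contra hne
        rcases (Ne.lt_or_gt hne) with hlt | hlt
        · haveI := Cardinal.le_one_iff_subsingleton.mp hlet
          have heq : (⟨γ1, hγ1.trans hlt⟩ : {γ : K κ // γ < hfun t β}) = ⟨hfun s β, hlt⟩ :=
            Subsingleton.elim _ _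
          exact absurd (congrArg Subtype.val heq) (ne_of_lt hγ1)
        · haveI := Cardinal.le_one_iff_subsingleton.mp hles
          have heq : (⟨γ2, hγ2.trans hlt⟩ : {γ : K κ // γ < hfun s β}) = ⟨hfun t β, hlt⟩ :=
            Subsingleton.elim _ _
          exact absurd (congrArg Subtype.val heq) (ne_of_lt hγ2)
    have hfeq : ∀ (β' : K κ) (hβ' : β' < α), cA s β' hβ' = cA t β' hβ' := by
      intro β' hβ'
      have h1 : f (cA s β' hβ') = f (cA t β' hβ') := by
        apply Subtype.ext
        apply preFun_ext
        · rw [hdomf s β' hβ', hdomf t β' hβ']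
        · intro γ hγs hγt
          have hγ : γ < β' := by rw [← hdomf s β' hβ']; exact hγs
          have hγα : γ < α := hγ.trans hβ'
          have e1 : (f (cA s β' hβ')).1.2 ⟨γ, hγs⟩ = hfun s ⟨γ, hγα⟩ :=
            (hwd s ⟨γ, hγα⟩ β' hγ hβ' hγs).symm
          have e2 : (f (cA t β' hβ')).1.2 ⟨γ, hγt⟩ = hfun t ⟨γ, hγα⟩ :=
            (hwd t ⟨γ, hγα⟩ β' hγ hβ' hγt).symm
          rw [e1, e2]
          exact hhf ⟨γ, hγα⟩
      exact hfbij.1 h1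
    apply Subtype.ext
    apply preFun_ext (h1 := (hSdom s).trans (hSdom t).symm)
    intro γ hγs hγt
    have hγα : γ < α := by rw [← hSdom s]; exact hγs
    obtain ⟨β', hβ'1, hβ'2⟩ := hα.2 γ hγα
    have hcc : cut κ s.1 β' = cut κ t.1 β' := congrArg Subtype.val (hfeq β' hβ'2)
    have pfs : γ < (cut κ s.1 β').1 := by
      rw [cut_fst_of_le _ (by rw [hSdom s]; exact hβ'2.le)]; exact hβ'1
    have pft : γ < (cut κ t.1 β').1 := by
      rw [cut_fst_of_le _ (by rw [hSdom t]; exact hβ'2.le)]; exact hβ'1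
    calc s.1.2 ⟨γ, hγs⟩ = (cut κ s.1 β').2 ⟨γ, pfs⟩ := rfl
      _ = (cut κ t.1 β').2 ⟨γ, pft⟩ := preFun_val_congr hcc pfs pft
      _ = t.1.2 ⟨γ, hγt⟩ := rfl
  -- counting
  have hmk : #↥S ≤ #(ℕ → Option Kα) := Cardinal.mk_le_of_injective hGinj
  have harrow : #(ℕ → Option Kα) = (#Kα + 1) ^ (ℵ₀ : Cardinal.{u}) := by
    rw [Cardinal.mk_arrow, Cardinal.lift_uzero, Cardinal.mk_option, Cardinal.mk_nat,
      Cardinal.lift_aleph0]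
  have hlam : #Kα < κ := Cardinal.mk_Iio_ord_toType α
  have hμκ : max (#Kα) ℵ₀ < κ := max_lt hlam haleph
  have hopt : #Kα + 1 ≤ max (#Kα) ℵ₀ := by
    calc #Kα + 1 ≤ max (#Kα) ℵ₀ + max (#Kα) ℵ₀ :=
          add_le_add (le_max_left _ _) (le_trans Cardinal.one_le_aleph0 (le_max_right _ _))
      _ = max (#Kα) ℵ₀ := Cardinal.add_eq_self (le_max_right _ _)
  calc #↥S ≤ (#Kα + 1) ^ (ℵ₀ : Cardinal.{u}) := by rw [← harrow]; exact hmk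
    _ ≤ (max (#Kα) ℵ₀) ^ (ℵ₀ : Cardinal.{u}) := Cardinal.power_le_power_right hopt
    _ < κ := hpow _ hμκ


end GBaire
end
end

section
/- Let κ be an uncountable regular cardinal and let T be a κ-Kurepa subtree of ^{<κ}κ. Assume that either κ is not inaccessible or T is stationary slim. If the set [T] is a retract of ^κκ, then [T] contains an isolated point. -/
open Cardinal Set

noncomputable section

namespace GBaire

section Aux
variable {κ : Cardinal.{u}}

lemma K_nonempty (hκ : ℵ₀ < κ) : Nonempty (K κ) :=
  Ordinal.toType_nonempty_iff_ne_zero.2 (by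
    rw [ne_eq, Cardinal.ord_eq_zero]
    rintro rfl
    exact absurd hκ (by simp))

lemma existsGt (hκ : ℵ₀ < κ) (x : K κ) : ∃ y : K κ, x < y := by
  set e := (Ordinal.ToType.mk (o := κ.ord)) with he
  have h1 : Order.succ (e.symm x).1 < κ.ord := (Cardinal.isSuccLimit_ord hκ.le).succ_lt (e.symm x).2
  refine ⟨e ⟨Order.succ (e.symm x).1, mem_Iio.2 h1⟩, ?_⟩
  conv_lhs => rw [← e.apply_symm_apply x]
  rw [e.lt_iff_lt]
  exact Subtype.mk_lt_mk.2 (Order.lt_succ _)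

lemma bdd_of_small (hreg : κ.IsRegular) {ι : Type u} (f : ι → K κ)
    (hι : #ι < κ) : ∃ b : K κ, ∀ i, f i ≤ b := by
  set e := (Ordinal.ToType.mk (o := κ.ord)) with he
  have hlt : ∀ i, ((e.symm (f i) : Set.Iio κ.ord) : Ordinal) < κ.ord := fun i => (e.symm (f i)).2
  have hsup : (⨆ i, ((e.symm (f i) : Set.Iio κ.ord) : Ordinal)) < κ.ord :=
    Cardinal.iSup_lt_ord_of_isRegular hreg hι hlt
  refine ⟨e ⟨_, hsup⟩, fun i => ?_⟩
  have : f i = e (e.symm (f i)) := (e.apply_symm_apply (f i)).symm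
  rw [this, e.le_iff_le]
  exact Ordinal.le_iSup _ i

lemma exists_isLUB (A : Set (K κ)) (hb : ∃ b : K κ, ∀ a ∈ A, a ≤ b) :
    ∃ x : K κ, IsLUB A x := by
  have hwf : WellFounded ((· < ·) : K κ → K κ → Prop) := IsWellFounded.wf
  obtain ⟨b, hbb⟩ := hb
  have hne : (upperBounds A).Nonempty := ⟨b, fun a ha => hbb a ha⟩
  refine ⟨hwf.min _ hne, hwf.min_mem _ hne, fun y hy => ?_⟩
  exact not_lt.1 (hwf.not_lt_min _ hy)

lemma lub_cofinal {A : Set (K κ)} {δ γ : K κ} (h : IsLUB A δ) (hγ : γ < δ) :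
    ∃ a ∈ A, γ < a := by
  by_contra hc
  push_neg at hc
  exact absurd (h.2 hc) (not_le.2 hγ)

lemma mk_Iio_lt (α : K κ) : #{β : K κ // β < α} < κ := Cardinal.mk_Iio_toType_ord_lt α

end Aux
section Aux2
variable {κ : Cardinal.{u}}

/-- Pointwise agreement below `β`. -/
def agree (x y : K κ → K κ) (β : K κ) : Prop := ∀ γ : K κ, γ < β → x γ = y γ

lemma resT_eq_iff {x y : K κ → K κ} {β : K κ} :
    resT κ x β = resT κ y β ↔ agree x y β := by
  constructor
  · intro h γ hγ
    have h2 := (Sigma.mk.inj_iff.1 h).2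
    have := congrFun (eq_of_heq h2) ⟨γ, hγ⟩
    exact this
  · intro h
    exact congrArg (Sigma.mk β) (funext fun b => h b.1 b.2)

lemma agree_mono {x y : K κ → K κ} {β β' : K κ} (hle : β' ≤ β) (h : agree x y β) :
    agree x y β' := fun γ hγ => h γ (lt_of_lt_of_le hγ hle)

lemma agree_refl (x : K κ → K κ) (β : K κ) : agree x x β := fun _ _ => rfl

lemma agree_symm {x y : K κ → K κ} {β : K κ} (h : agree x y β) : agree y x β :=
  fun γ hγ => (h γ hγ).symm

lemma agree_trans {x y z : K κ → K κ} {β : K κ} (h : agree x y β) (h' : agree y z β) :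
    agree x z β := fun γ hγ => (h γ hγ).trans (h' γ hγ)

lemma agree_of_isLUB {x y : K κ → K κ} {A : Set (K κ)} {δ : K κ} (h : IsLUB A δ)
    (ha : ∀ a ∈ A, agree x y a) : agree x y δ := by
  intro γ hγ
  obtain ⟨a, haA, hlt⟩ := lub_cofinal h hγ
  exact ha a haA γ hlt

/-- The key consequence of continuity: `r` is "determined at bounded levels". -/
lemma cont_point {r : (K κ → K κ) → (K κ → K κ)}
    (hco : @Continuous _ _ (baire κ) (baire κ) r) (hκ : ℵ₀ < κ)
    (x : K κ → K κ) (α : K κ) :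
    ∃ β : K κ, ∀ z, agree z x β → agree (r z) (r x) α := by
  have key : ∀ U : Set (K κ → K κ), @IsOpen _ (baire κ) U → ∀ w ∈ U,
      ∃ β : K κ, ∀ z, agree z w β → z ∈ U := by
    intro U hU
    have hU' : TopologicalSpace.GenerateOpen {U | ∃ s : PreFun κ, U = Nbhd κ s} U := hU
    induction hU' with
    | basic V hV =>
      obtain ⟨s, rfl⟩ := hV
      intro w hw
      refine ⟨s.1, fun z hz => ?_⟩
      have : resT κ z s.1 = resT κ w s.1 := resT_eq_iff.2 hz
      show resT κ z s.1 = s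
      rw [this]; exact hw
    | univ =>
      intro w _
      obtain ⟨b⟩ := K_nonempty (κ := κ) hκ
      exact ⟨b, fun _ _ => trivial⟩
    | inter V W hV hW ihV ihW =>
      intro w hw
      obtain ⟨β₁, h₁⟩ := ihV hV w hw.1
      obtain ⟨β₂, h₂⟩ := ihW hW w hw.2
      refine ⟨max β₁ β₂, fun z hz => ?_⟩
      exact ⟨h₁ z (agree_mono (le_max_left _ _) hz), h₂ z (agree_mono (le_max_right _ _) hz)⟩
    | sUnion S hS ih =>
      intro w hw
      obtain ⟨V, hVS, hwV⟩ := hw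
      obtain ⟨β, hβ⟩ := ih V hVS (hS V hVS) w hwV
      exact ⟨β, fun z hz => ⟨V, hVS, hβ z hz⟩⟩
  have hopen : @IsOpen _ (baire κ) (r ⁻¹' Nbhd κ (resT κ (r x) α)) := by
    exact (@continuous_def _ _ (baire κ) (baire κ) r).mp hco _
      (TopologicalSpace.GenerateOpen.basic _ ⟨_, rfl⟩)
  have hx : x ∈ r ⁻¹' Nbhd κ (resT κ (r x) α) := rfl
  obtain ⟨β, hβ⟩ := key _ hopen x hx
  refine ⟨β, fun z hz => ?_⟩
  have := hβ z hz
  exact resT_eq_iff.1 this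

end Aux2
section Aux3
variable {κ : Cardinal.{u}} {T : Set (PreFun κ)}

/-- `(β, x)` is a stable node for `r`. -/
def Stab (r : (K κ → K κ) → (K κ → K κ)) (β : K κ) (x : K κ → K κ) : Prop :=
  ∀ z, agree z x β → agree (r z) x β

lemma stab_congr {r : (K κ → K κ) → (K κ → K κ)} {β : K κ} {x x' : K κ → K κ}
    (hxx : agree x x' β) (h : Stab r β x) : Stab r β x' := by
  intro z hz
  exact agree_trans (h z (agree_trans hz (agree_symm hxx))) hxx

lemma stab_glue {r : (K κ → K κ) → (K κ → K κ)} {A : Set (K κ)} {δ : K κ}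
    (hA : IsLUB A δ) {x : K κ → K κ} (h : ∀ β ∈ A, Stab r β x) : Stab r δ x := by
  intro z hz
  apply agree_of_isLUB hA
  intro a haA
  exact h a haA z (agree_mono (hA.1 haA) hz)

lemma stab_branch {r : (K κ → K κ) → (K κ → K κ)}
    (hrange : Set.range r ⊆ branches κ T) {β : K κ} {x : K κ → K κ}
    (h : Stab r β x) : r x ∈ branches κ T ∧ agree (r x) x β :=
  ⟨hrange ⟨x, rfl⟩, h x (agree_refl x β)⟩

/-- Every branch admits stable levels above any given level. -/
lemma stab_exists {r : (K κ → K κ) → (K κ → K κ)}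
    (hco : @Continuous _ _ (baire κ) (baire κ) r) (hκ : ℵ₀ < κ) (hreg : κ.IsRegular)
    (hid : ∀ x ∈ branches κ T, r x = x)
    {y : K κ → K κ} (hy : y ∈ branches κ T) (α : K κ) :
    ∃ β : K κ, α ≤ β ∧ Stab r β y := by
  have hry : r y = y := hid y hy
  -- one-step function
  have step : ∀ a : K κ, ∃ b : K κ, a < b ∧ ∀ z, agree z y b → agree (r z) y a := by
    intro a
    obtain ⟨b₀, hb₀⟩ := cont_point hco hκ y a
    obtain ⟨b, hab⟩ := existsGt hκ (max a b₀)
    refine ⟨b, lt_of_le_of_lt (le_max_left _ _) hab, fun z hz => ?_⟩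
    have := hb₀ z (agree_mono (le_of_lt (lt_of_le_of_lt (le_max_right _ _) hab)) hz)
    rwa [hry] at this
  choose f hf1 hf2 using step
  -- iterate ω many times
  let g : ℕ → K κ := fun n => f^[n] α
  have hgmono : StrictMono g := strictMono_nat_of_lt_succ (by
    intro n
    simp only [g, Function.iterate_succ_apply']
    exact hf1 _)
  have hbdd : ∃ b : K κ, ∀ n : ULift.{u} ℕ, g n.down ≤ b := by
    apply bdd_of_small hreg (fun n : ULift.{u} ℕ => g n.down)
    rw [Cardinal.mk_uLift, Cardinal.mk_denumerable]
    simpa using hκ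
  obtain ⟨b, hb⟩ := hbdd
  obtain ⟨δ, hδ⟩ := exists_isLUB (Set.range g) ⟨b, by rintro a ⟨n, rfl⟩; exact hb ⟨n⟩⟩
  refine ⟨δ, ?_, ?_⟩
  · exact hδ.1 ⟨0, rfl⟩
  · intro z hz
    apply agree_of_isLUB hδ
    rintro a ⟨n, rfl⟩
    have h1 : agree z y (g (n+1)) := agree_mono (hδ.1 ⟨n+1, rfl⟩) hz
    have : agree (r z) y (g n) := by
      have := hf2 (g n) z ?_
      · exact this
      · simpa only [g, Function.iterate_succ_apply'] using h1
    exact this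

end Aux3
section Aux4
variable {κ : Cardinal.{u}} {T : Set (PreFun κ)}

lemma stab_bot {r : (K κ → K κ) → (K κ → K κ)} {β : K κ} (hbot : ∀ γ : K κ, ¬ γ < β)
    (x : K κ → K κ) : Stab r β x := fun z _ => fun γ hγ => absurd hγ (hbot γ)

/-- Splitting: any stable node has two incompatible stable extensions. -/
lemma stab_split {r : (K κ → K κ) → (K κ → K κ)}
    (hco : @Continuous _ _ (baire κ) (baire κ) r) (hκ : ℵ₀ < κ) (hreg : κ.IsRegular)
    (hrange : Set.range r ⊆ branches κ T) (hid : ∀ x ∈ branches κ T, r x = x)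
    (hniso : ¬ ∃ y, IsIsolatedIn κ (branches κ T) y)
    {β : K κ} {x : K κ → K κ} (h : Stab r β x) :
    ∃ (β₀ : K κ) (x₀ : K κ → K κ) (β₁ : K κ) (x₁ : K κ → K κ),
      Stab r β₀ x₀ ∧ Stab r β₁ x₁ ∧ β < β₀ ∧ β < β₁ ∧
      agree x₀ x β ∧ agree x₁ x β ∧
      ∃ γ : K κ, γ < β₀ ∧ γ < β₁ ∧ x₀ γ ≠ x₁ γ := by
  obtain ⟨hyb, hagr⟩ := stab_branch hrange h
  set y := r x with hy
  -- y is not isolated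
  have hni : ¬ (Nbhd κ (resT κ y β) ∩ branches κ T = {y}) := by
    intro hc
    exact hniso ⟨y, hyb, β, hc⟩
  have hyN : y ∈ Nbhd κ (resT κ y β) ∩ branches κ T := by
    refine ⟨?_, hyb⟩
    show resT κ y (resT κ y β).1 = resT κ y β
    rfl
  have : ∃ y' ∈ Nbhd κ (resT κ y β) ∩ branches κ T, y' ≠ y := by
    by_contra hc
    push_neg at hc
    apply hni
    apply Set.eq_singleton_iff_unique_mem.2 ⟨hyN, fun z hz => hc z hz⟩
  obtain ⟨y', ⟨hy'N, hy'b⟩, hne⟩ := this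
  have hay' : agree y' y β := by
    have : resT κ y' β = resT κ y β := hy'N
    exact resT_eq_iff.1 this
  obtain ⟨γ, hγ⟩ : ∃ γ : K κ, y γ ≠ y' γ := by
    by_contra hc
    push_neg at hc
    exact hne (funext fun γ => (hc γ).symm)
  have hβγ : β ≤ γ := by
    by_contra hc
    exact hγ (hay' γ (not_le.1 hc)).symm
  obtain ⟨γ', hγ'⟩ := existsGt hκ γ
  obtain ⟨β₀, hβ₀le, hβ₀⟩ := stab_exists (T := T) hco hκ hreg hid hyb γ'
  obtain ⟨β₁, hβ₁le, hβ₁⟩ := stab_exists (T := T) hco hκ hreg hid hy'b γ'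
  have hγβ₀ : γ < β₀ := lt_of_lt_of_le hγ' hβ₀le
  have hγβ₁ : γ < β₁ := lt_of_lt_of_le hγ' hβ₁le
  exact ⟨β₀, y, β₁, y', hβ₀, hβ₁, lt_of_le_of_lt hβγ hγβ₀, lt_of_le_of_lt hβγ hγβ₁,
    hagr, agree_trans hay' hagr, γ, hγβ₀, hγβ₁, hγ⟩

end Aux4
section Aux5
variable {κ : Cardinal.{u}} {T : Set (PreFun κ)}

abbrev Node (κ : Cardinal.{u}) : Type u := K κ × (K κ → K κ)

/-- Specification for a splitting pair over node `(β, x)`. -/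
def SplitSpec (r : (K κ → K κ) → (K κ → K κ)) (β : K κ) (x : K κ → K κ)
    (p : Node κ × Node κ) : Prop :=
  Stab r p.1.1 p.1.2 ∧ Stab r p.2.1 p.2.2 ∧ β < p.1.1 ∧ β < p.2.1 ∧
  agree p.1.2 x β ∧ agree p.2.2 x β ∧
  ∃ γ : K κ, γ < p.1.1 ∧ γ < p.2.1 ∧ p.1.2 γ ≠ p.2.2 γ

/-- Bundled context: a retraction onto `[T]` with no isolated points. -/
structure Ctx (κ : Cardinal.{u}) (T : Set (PreFun κ)) : Type u where
  r : (K κ → K κ) → (K κ → K κ)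
  hco : @Continuous _ _ (baire κ) (baire κ) r
  hκ : ℵ₀ < κ
  hreg : κ.IsRegular
  hrange : Set.range r ⊆ branches κ T
  hid : ∀ x ∈ branches κ T, r x = x
  hniso : ¬ ∃ y, IsIsolatedIn κ (branches κ T) y

variable (c : Ctx κ T)

attribute [local instance] Classical.propDecidable

lemma split_exists {β : K κ} {x : K κ → K κ} (h : Stab c.r β x) :
    ∃ p : Node κ × Node κ, SplitSpec c.r β x p := by
  obtain ⟨β₀, x₀, β₁, x₁, h0, h1, hb0, hb1, ha0, ha1, hγ⟩ :=
    stab_split c.hco c.hκ c.hreg c.hrange c.hid c.hniso h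
  exact ⟨((β₀, x₀), (β₁, x₁)), h0, h1, hb0, hb1, ha0, ha1, hγ⟩

noncomputable def Ctx.node0 : Node κ :=
  letI b := Classical.choice (K_nonempty c.hκ)
  (b, fun _ => b)

noncomputable def Ctx.split (β : K κ) (x : K κ → K κ) : Node κ × Node κ :=
  if h : Stab c.r β x then (split_exists c h).choose else (c.node0, c.node0)

lemma Ctx.split_spec {β : K κ} {x : K κ → K κ} (h : Stab c.r β x) :
    SplitSpec c.r β x (c.split β x) := by
  rw [Ctx.split, dif_pos h]
  exact (split_exists c h).choose_spec

/-- Chain condition for a family of nodes indexed by stages `< β`. -/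
def ChainCond (β : K κ) (s : K κ → Node κ) : Prop :=
  ∀ ξ ζ : K κ, ξ < ζ → ζ < β → (s ξ).1 < (s ζ).1 ∧ agree (s ζ).2 (s ξ).2 (s ξ).1

noncomputable def glueFun (β : K κ) (s : K κ → Node κ) (d : K κ → K κ) : K κ → K κ :=
  fun γ => if h : ∃ ξ, ξ < β ∧ γ < (s ξ).1 then (s h.choose).2 γ else d γ

noncomputable def Ctx.glueNode (β : K κ) (s : K κ → Node κ) : Node κ :=
  if h : ∃ δ : K κ, IsLUB {a | ∃ ξ, ξ < β ∧ (s ξ).1 = a} δ then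
    (h.choose, glueFun β s c.node0.2) else c.node0

lemma glueFun_agree {β : K κ} {s : K κ → Node κ} (hch : ChainCond β s) (d : K κ → K κ)
    {ξ : K κ} (hξ : ξ < β) : agree (glueFun β s d) (s ξ).2 (s ξ).1 := by
  intro γ hγ
  have hex : ∃ ζ, ζ < β ∧ γ < (s ζ).1 := ⟨ξ, hξ, hγ⟩
  rw [glueFun, dif_pos hex]
  set ζ := hex.choose with hζdef
  obtain ⟨hζβ, hγζ⟩ := hex.choose_spec
  rcases lt_trichotomy ζ ξ with hlt | heq | hgt
  · exact ((hch ζ ξ hlt hξ).2 γ hγζ).symm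
  · rw [heq]
  · exact (hch ξ ζ hgt hζβ).2 γ hγ

lemma Ctx.glue_spec {β : K κ} {s : K κ → Node κ} (hne : ∃ ξ : K κ, ξ < β)
    (hch : ChainCond β s) :
    IsLUB {a | ∃ ξ, ξ < β ∧ (s ξ).1 = a} (c.glueNode β s).1 ∧
    ∀ ξ, ξ < β → agree (c.glueNode β s).2 (s ξ).2 (s ξ).1 := by
  have hbdd : ∃ b : K κ, ∀ a ∈ {a | ∃ ξ, ξ < β ∧ (s ξ).1 = a}, a ≤ b := by
    obtain ⟨b, hb⟩ := bdd_of_small c.hreg (fun ξ : {ξ : K κ // ξ < β} => (s ξ.1).1) (mk_Iio_lt β)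
    exact ⟨b, by rintro a ⟨ξ, hξ, rfl⟩; exact hb ⟨ξ, hξ⟩⟩
  have hex : ∃ δ : K κ, IsLUB {a | ∃ ξ, ξ < β ∧ (s ξ).1 = a} δ := exists_isLUB _ hbdd
  rw [Ctx.glueNode, dif_pos hex]
  exact ⟨hex.choose_spec, fun ξ hξ => glueFun_agree hch _ hξ⟩

end Aux5
section Aux6
variable {κ : Cardinal.{u}} {T : Set (PreFun κ)}

attribute [local instance] Classical.propDecidable

variable (c : Ctx κ T)

noncomputable def Ctx.E : K κ → (K κ → Bool) → Node κ :=
  (@IsWellFounded.wf (K κ) (· < ·) _).fix fun β ih σ =>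
    if hmax : ∃ γ, γ < β ∧ ∀ δ, δ < β → δ ≤ γ then
      (if σ hmax.choose then
        (c.split (ih hmax.choose hmax.choose_spec.1 σ).1 (ih hmax.choose hmax.choose_spec.1 σ).2).1
       else
        (c.split (ih hmax.choose hmax.choose_spec.1 σ).1 (ih hmax.choose hmax.choose_spec.1 σ).2).2)
    else if _hne : ∃ γ, γ < β then
      c.glueNode β (fun ξ => if hξ : ξ < β then ih ξ hξ σ else c.node0)
    else (β, c.node0.2)

lemma Ctx.E_eq (β : K κ) (σ : K κ → Bool) : c.E β σ =
    if hmax : ∃ γ, γ < β ∧ ∀ δ, δ < β → δ ≤ γ then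
      (if σ hmax.choose then
        (c.split (c.E hmax.choose σ).1 (c.E hmax.choose σ).2).1
       else
        (c.split (c.E hmax.choose σ).1 (c.E hmax.choose σ).2).2)
    else if _hne : ∃ γ, γ < β then
      c.glueNode β (fun ξ => if hξ : ξ < β then c.E ξ σ else c.node0)
    else (β, c.node0.2) := by
  conv_lhs => rw [Ctx.E, WellFounded.fix_eq]
  rfl

/-- The inductive invariant of the construction. -/
def Ctx.Inv (β : K κ) : Prop :=
  ∀ σ : K κ → Bool,
    Stab c.r (c.E β σ).1 (c.E β σ).2 ∧
    β ≤ (c.E β σ).1 ∧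
    (∀ γ, γ < β → (c.E γ σ).1 < (c.E β σ).1 ∧ agree (c.E β σ).2 (c.E γ σ).2 (c.E γ σ).1) ∧
    (∀ σ' : K κ → Bool, (∀ γ, γ < β → σ γ = σ' γ) → c.E β σ = c.E β σ') ∧
    (∀ σ' : K κ → Bool, (∃ γ, γ < β ∧ σ γ ≠ σ' γ) →
      ∃ δ, δ < (c.E β σ).1 ∧ δ < (c.E β σ').1 ∧ (c.E β σ).2 δ ≠ (c.E β σ').2 δ)

lemma Ctx.inv : ∀ β : K κ, c.Inv β := by
  intro β
  induction β using WellFounded.induction (@IsWellFounded.wf (K κ) (· < ·) _) with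
  | _ β ih =>
  intro σ
  by_cases hmax : ∃ γ, γ < β ∧ ∀ δ, δ < β → δ ≤ γ
  · -- successor case
    set γ₀ := hmax.choose with hγ₀def
    obtain ⟨hγ₀β, hmaxp⟩ := hmax.choose_spec
    have hE : ∀ τ : K κ → Bool, c.E β τ =
        (if τ γ₀ then (c.split (c.E γ₀ τ).1 (c.E γ₀ τ).2).1
         else (c.split (c.E γ₀ τ).1 (c.E γ₀ τ).2).2) := by
      intro τ; rw [c.E_eq β τ, dif_pos hmax]
    have IH := ih γ₀ hγ₀β σ
    obtain ⟨hP1, hP2, hP3, hP4, hP5⟩ := IH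
    have sp := c.split_spec hP1
    set P := c.E γ₀ σ
    set q := c.E β σ with hq
    have hql : P.1 < q.1 ∧ agree q.2 P.2 P.1 ∧ Stab c.r q.1 q.2 := by
      rw [hq, hE σ]
      by_cases hσγ : σ γ₀
      · rw [if_pos hσγ]; exact ⟨sp.2.2.1, sp.2.2.2.2.1, sp.1⟩
      · rw [if_neg hσγ]; exact ⟨sp.2.2.2.1, sp.2.2.2.2.2.1, sp.2.1⟩
    refine ⟨hql.2.2, ?_, ?_, ?_, ?_⟩
    · -- β ≤ q.1
      by_contra hc
      have h1 : q.1 ≤ γ₀ := hmaxp _ (not_le.1 hc)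
      exact absurd (lt_of_le_of_lt (h1.trans hP2) hql.1) (lt_irrefl _)
    · -- chain property
      intro γ hγβ
      rcases eq_or_lt_of_le (hmaxp γ hγβ) with heq | hlt
      · rw [heq]; exact ⟨hql.1, hql.2.1⟩
      · obtain ⟨hl, ha⟩ := hP3 γ hlt
        exact ⟨hl.trans hql.1, agree_trans (agree_mono hl.le hql.2.1) ha⟩
    · -- locality
      intro σ' hσσ'
      have hPP : c.E γ₀ σ = c.E γ₀ σ' := hP4 σ' (fun γ hγ => hσσ' γ (hγ.trans hγ₀β))
      rw [hq, hE σ, hE σ', hPP, hσσ' γ₀ hγ₀β]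
    · -- splitting
      intro σ' ⟨γ, hγβ, hγne⟩
      by_cases hlow : ∃ γ', γ' < γ₀ ∧ σ γ' ≠ σ' γ'
      · obtain ⟨δ, hδ1, hδ2, hδne⟩ := hP5 σ' hlow
        have IH' := ih γ₀ hγ₀β σ'
        have sp' := c.split_spec IH'.1
        have hql' : (c.E γ₀ σ').1 < (c.E β σ').1 ∧
            agree (c.E β σ').2 (c.E γ₀ σ').2 (c.E γ₀ σ').1 := by
          rw [hE σ']
          by_cases hσγ : σ' γ₀
          · rw [if_pos hσγ]; exact ⟨sp'.2.2.1, sp'.2.2.2.2.1⟩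
          · rw [if_neg hσγ]; exact ⟨sp'.2.2.2.1, sp'.2.2.2.2.2.1⟩
        refine ⟨δ, hδ1.trans hql.1, hδ2.trans hql'.1, ?_⟩
        rw [hql.2.1 δ hδ1, hql'.2 δ hδ2]
        exact hδne
      · push_neg at hlow
        have hγeq : γ = γ₀ := by
          rcases eq_or_lt_of_le (hmaxp γ hγβ) with heq | hlt
          · exact heq
          · exact absurd (hlow γ hlt) (by simpa using hγne)
        have hσγ₀ : σ γ₀ ≠ σ' γ₀ := hγeq ▸ hγne
        have hPP : c.E γ₀ σ = c.E γ₀ σ' := hP4 σ' (fun γ' hγ' => by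
          by_contra hc
          exact absurd (hlow γ' hγ') (by simpa using hc))
        obtain ⟨δ, hδ1, hδ2, hδne⟩ := sp.2.2.2.2.2.2
        rw [hq, hE σ, hE σ', ← hPP]
        cases hb : σ γ₀
        · have hb' : σ' γ₀ = true := by
            cases hb2 : σ' γ₀
            · exact absurd (hb.trans hb2.symm) hσγ₀
            · rfl
          rw [hb', if_pos rfl, if_neg (by simp)]
          exact ⟨δ, hδ2, hδ1, hδne.symm⟩
        · have hb' : σ' γ₀ = false := by
            cases hb2 : σ' γ₀
            · rfl
            · exact absurd (hb.trans hb2.symm) hσγ₀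
          rw [hb', if_pos rfl, if_neg (by simp)]
          exact ⟨δ, hδ1, hδ2, hδne⟩
  · by_cases hne : ∃ γ : K κ, γ < β
    · -- limit case
      have hlimit : ∀ γ, γ < β → ∃ δ, γ < δ ∧ δ < β := by
        intro γ hγ
        push_neg at hmax
        obtain ⟨δ, hδβ, hγδ⟩ := by
          have := hmax γ
          exact this hγ
        exact ⟨δ, hγδ, hδβ⟩
      have hE : ∀ τ : K κ → Bool, c.E β τ =
          c.glueNode β (fun ξ => if hξ : ξ < β then c.E ξ τ else c.node0) := by
        intro τ; rw [c.E_eq β τ, dif_neg hmax, dif_pos hne]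
      have hch : ∀ τ : K κ → Bool,
          ChainCond β (fun ξ => if hξ : ξ < β then c.E ξ τ else c.node0) := by
        intro τ ξ ζ hξζ hζβ
        have hξβ : ξ < β := hξζ.trans hζβ
        simp only [dif_pos hξβ, dif_pos hζβ]
        exact (ih ζ hζβ τ).2.2.1 ξ hξζ
      have hgl : ∀ τ : K κ → Bool,
          IsLUB {a | ∃ ξ, ξ < β ∧ ((fun ξ => if hξ : ξ < β then c.E ξ τ else c.node0) ξ).1 = a}
            (c.E β τ).1 ∧
          ∀ ξ, ξ < β → agree (c.E β τ).2 (c.E ξ τ).2 (c.E ξ τ).1 := by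
        intro τ
        have := c.glue_spec hne (hch τ)
        rw [← hE τ] at this
        refine ⟨this.1, fun ξ hξ => ?_⟩
        have h2 := this.2 ξ hξ
        rwa [dif_pos hξ] at h2
      have hmem : ∀ τ : K κ → Bool, ∀ ξ, ξ < β → (c.E ξ τ).1 ≤ (c.E β τ).1 := by
        intro τ ξ hξ
        exact (hgl τ).1.1 ⟨ξ, hξ, by simp only [dif_pos hξ]⟩
      refine ⟨?_, ?_, ?_, ?_, ?_⟩
      · -- Stab
        apply stab_glue (hgl σ).1
        rintro a ⟨ξ, hξβ, ha⟩
        simp only [dif_pos hξβ] at ha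
        subst ha
        exact stab_congr (agree_symm ((hgl σ).2 ξ hξβ)) (ih ξ hξβ σ).1
      · -- β ≤ level
        by_contra hc
        obtain ⟨δ, h1, h2⟩ := hlimit _ (not_le.1 hc)
        exact absurd (lt_of_le_of_lt ((ih δ h2 σ).2.1.trans (hmem σ δ h2)) h1) (lt_irrefl _)
      · -- chain
        intro γ hγβ
        obtain ⟨δ, h1, h2⟩ := hlimit γ hγβ
        refine ⟨lt_of_lt_of_le ((ih δ h2 σ).2.2.1 γ h1).1 (hmem σ δ h2), (hgl σ).2 γ hγβ⟩
      · -- locality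
        intro σ' hσσ'
        rw [hE σ, hE σ']
        congr 1
        funext ξ
        by_cases hξ : ξ < β
        · rw [dif_pos hξ, dif_pos hξ]
          exact (ih ξ hξ σ).2.2.2.1 σ' (fun γ hγ => hσσ' γ (hγ.trans hξ))
        · rw [dif_neg hξ, dif_neg hξ]
      · -- splitting
        intro σ' ⟨γ, hγβ, hγne⟩
        obtain ⟨η, h1, h2⟩ := hlimit γ hγβ
        obtain ⟨δ, hδ1, hδ2, hδne⟩ := (ih η h2 σ).2.2.2.2 σ' ⟨γ, h1, hγne⟩
        refine ⟨δ, lt_of_lt_of_le hδ1 (hmem σ η h2), lt_of_lt_of_le hδ2 (hmem σ' η h2), ?_⟩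
        rw [(hgl σ).2 η h2 δ hδ1, (hgl σ').2 η h2 δ hδ2]
        exact hδne
    · -- base case
      have hE : ∀ τ : K κ → Bool, c.E β τ = (β, c.node0.2) := by
        intro τ; rw [c.E_eq β τ, dif_neg hmax, dif_neg hne]
      push_neg at hne
      refine ⟨?_, ?_, ?_, ?_, ?_⟩
      · rw [hE σ]; exact stab_bot (by simpa using hne) _
      · rw [hE σ]
      · intro γ hγ; exact absurd hγ (by simpa using hne γ)
      · intro σ' _; rw [hE σ, hE σ']
      · intro σ' ⟨γ, hγ, _⟩; exact absurd hγ (by simpa using hne γ)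

end Aux6
section Aux7
variable {κ : Cardinal.{u}} {T : Set (PreFun κ)}

attribute [local instance] Classical.propDecidable

variable (c : Ctx κ T)

lemma mk_bool_arrow (α : Type u) : #(α → Bool) = 2 ^ #α := by
  have : #(α → Bool) = #(α → ULift.{u} Bool) :=
    Cardinal.mk_congr (Equiv.arrowCongr (Equiv.refl _) Equiv.ulift.symm)
  rw [this]
  simp [Cardinal.power_def]

/-- Extension of a partial binary sequence to a total one. -/
noncomputable def extend (β : K κ) (σ : {i : K κ // i < β} → Bool) : K κ → Bool :=
  fun γ => if h : γ < β then σ ⟨γ, h⟩ else false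

lemma E_extend (β : K κ) (σ : K κ → Bool) :
    c.E β σ = c.E β (extend β (fun i => σ i.1)) := by
  apply (c.inv β σ).2.2.2.1
  intro γ hγ
  rw [extend, dif_pos hγ]

/-- The counting injection into a level of `T`. -/
lemma Ctx.count {β δ : K κ} (hbd : ∀ σ : K κ → Bool, (c.E β σ).1 ≤ δ) :
    #({i : K κ // i < β} → Bool) ≤ #(level κ T δ) := by
  have hy : ∀ σ : K κ → Bool, c.r (c.E β σ).2 ∈ branches κ T ∧
      agree (c.r (c.E β σ).2) (c.E β σ).2 (c.E β σ).1 :=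
    fun σ => stab_branch c.hrange (c.inv β σ).1
  refine Cardinal.mk_le_of_injective
    (f := fun σ => (⟨resT κ (c.r (c.E β (extend β σ)).2) δ,
      (hy (extend β σ)).1 δ, rfl⟩ : level κ T δ)) ?_
  intro σ σ' heq
  by_contra hne
  obtain ⟨i, hi⟩ : ∃ i, σ i ≠ σ' i := by
    by_contra hc
    push_neg at hc
    exact hne (funext hc)
  have hdiff : ∃ γ, γ < β ∧ extend β σ γ ≠ extend β σ' γ := by
    refine ⟨i.1, i.2, ?_⟩
    rw [extend, extend, dif_pos i.2, dif_pos i.2]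
    simpa using hi
  obtain ⟨δ', hδ'1, hδ'2, hδ'ne⟩ := (c.inv β (extend β σ)).2.2.2.2 (extend β σ') hdiff
  have heq' : resT κ (c.r (c.E β (extend β σ)).2) δ =
      resT κ (c.r (c.E β (extend β σ')).2) δ := congrArg Subtype.val heq
  have hag := resT_eq_iff.1 heq'
  have h1 : c.r (c.E β (extend β σ)).2 δ' = (c.E β (extend β σ)).2 δ' :=
    (hy (extend β σ)).2 δ' hδ'1
  have h2 : c.r (c.E β (extend β σ')).2 δ' = (c.E β (extend β σ')).2 δ' :=
    (hy (extend β σ')).2 δ' hδ'2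
  have h3 : δ' < δ := lt_of_lt_of_le hδ'1 (hbd _)
  exact hδ'ne (by rw [← h1, ← h2, hag δ' h3])

/-- At limit stages, the level of the construction is bounded by any bound on earlier
levels. -/
lemma Ctx.level_le_of_limit {δ b : K κ} (h1 : ∃ ξ : K κ, ξ < δ)
    (h2 : ∀ γ, γ < δ → ∃ η, γ < η ∧ η < δ) (σ : K κ → Bool)
    (hb : ∀ β, β < δ → (c.E β σ).1 ≤ b) : (c.E δ σ).1 ≤ b := by
  have hmax : ¬ ∃ γ, γ < δ ∧ ∀ γ', γ' < δ → γ' ≤ γ := by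
    rintro ⟨γ, hγ, hm⟩
    obtain ⟨η, hh, hh'⟩ := h2 γ hγ
    exact absurd (hm η hh') (not_le.2 hh)
  have hch : ChainCond δ (fun ξ => if hξ : ξ < δ then c.E ξ σ else c.node0) := by
    intro ξ ζ hξζ hζδ
    simp only [dif_pos (hξζ.trans hζδ), dif_pos hζδ]
    exact (c.inv ζ σ).2.2.1 ξ hξζ
  have hEδ : c.E δ σ = c.glueNode δ (fun ξ => if hξ : ξ < δ then c.E ξ σ else c.node0) := by
    rw [c.E_eq δ σ, dif_neg hmax, dif_pos h1]
  have hlub : IsLUB {a | ∃ ξ, ξ < δ ∧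
      ((fun ξ => if hξ : ξ < δ then c.E ξ σ else c.node0) ξ).1 = a} (c.E δ σ).1 := by
    rw [hEδ]; exact (c.glue_spec h1 hch).1
  apply hlub.2
  rintro a ⟨ξ, hξ, ha⟩
  simp only [dif_pos hξ] at ha
  subst ha
  exact hb ξ hξ

/-- A strict upper bound function for the levels of the construction. -/
lemma Ctx.gfun : ∃ g : K κ → K κ, ∀ β : K κ, β < g β ∧
    (2 ^ #{i : K κ // i < β} < κ → ∀ σ : K κ → Bool, (c.E β σ).1 < g β) := by
  have : ∀ β : K κ, ∃ gb : K κ, β < gb ∧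
      (2 ^ #{i : K κ // i < β} < κ → ∀ σ : K κ → Bool, (c.E β σ).1 < gb) := by
    intro β
    by_cases hs : 2 ^ #{i : K κ // i < β} < κ
    · have hsmall : #({i : K κ // i < β} → Bool) < κ := by
        rwa [mk_bool_arrow]
      obtain ⟨b, hb⟩ := bdd_of_small c.hreg
        (fun σ : {i : K κ // i < β} → Bool => (c.E β (extend β σ)).1) hsmall
      obtain ⟨gb, hgb⟩ := existsGt c.hκ (max b β)
      refine ⟨gb, lt_of_le_of_lt (le_max_right _ _) hgb, fun _ σ => ?_⟩
      have := hb (fun i => σ i.1)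
      rw [← E_extend] at this
      exact lt_of_le_of_lt (this.trans (le_max_left _ _)) hgb
    · obtain ⟨gb, hgb⟩ := existsGt c.hκ β
      exact ⟨gb, hgb, fun h => absurd h hs⟩
  choose g hg using this
  exact ⟨g, hg⟩

end Aux7

/-- Let `κ` be an uncountable regular cardinal and let `T` be a
`κ`-Kurepa subtree of `^{<κ}κ` such that either `κ` is not inaccessible or `T` is
stationary slim.  If `[T]` is a retract of `^κκ`, then `[T]` contains an isolated
point. -/
theorem isolated_point_of_retract
    (κ : Cardinal.{u}) (hκ : ℵ₀ < κ) (hreg : κ.IsRegular)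
    (T : Set (PreFun κ)) (hT : IsKurepa κ T)
    (hcase : ¬ κ.IsInaccessible ∨ StatSlim κ T)
    (hret : IsRetract κ (branches κ T)) :
    ∃ y, IsIsolatedIn κ (branches κ T) y := by
  by_contra hniso
  obtain ⟨r, hco, hrange, hid⟩ := hret
  let c : Ctx κ T := ⟨r, hco, hκ, hreg, hrange, hid, hniso⟩
  obtain ⟨g, hg⟩ := c.gfun
  by_cases hin : κ.IsInaccessible
  · -- inaccessible and stationary slim
    have hss : StatSlim κ T := hcase.resolve_left (not_not_intro hin)
    have hsmall : ∀ β : K κ, 2 ^ #{i : K κ // i < β} < κ :=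
      fun β => hin.isStrongPrelimit (mk_Iio_lt β)
    set C : Set (K κ) := {δ | (∃ ξ, ξ < δ) ∧ ∀ β, β < δ → g β < δ} with hC
    have hclosed : ClosedIn κ C := by
      intro A hA hne x hx
      obtain ⟨a, ha⟩ := hne
      obtain ⟨ξ, hξ⟩ := (hA ha).1
      refine ⟨⟨ξ, lt_of_lt_of_le hξ (hx.1 ha)⟩, ?_⟩
      intro β hβ
      obtain ⟨a', ha', hβa'⟩ := lub_cofinal hx hβ
      exact lt_of_lt_of_le ((hA ha').2 β hβa') (hx.1 ha')
    have hunb : UnboundedIn κ C := by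
      intro x
      have hstep : ∀ z : K κ, ∃ w : K κ, z < w ∧ ∀ β, β < z → g β < w := by
        intro z
        obtain ⟨b, hb⟩ := bdd_of_small hreg (fun ξ : {ξ : K κ // ξ < z} => g ξ.1) (mk_Iio_lt z)
        obtain ⟨w, hw⟩ := existsGt hκ (max z b)
        exact ⟨w, lt_of_le_of_lt (le_max_left _ _) hw,
          fun β hβ => lt_of_le_of_lt ((hb ⟨β, hβ⟩).trans (le_max_right _ _)) hw⟩
      choose F hF using hstep
      let a : ℕ → K κ := fun n => F^[n + 1] x
      have hamono : ∀ n, a n < a (n + 1) := fun n => by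
        have : a (n + 1) = F (a n) := by
          simp only [a, Function.iterate_succ_apply']
        rw [this]
        exact (hF _).1
      have hax : x < a 0 := (hF x).1
      obtain ⟨b, hb⟩ := bdd_of_small hreg (fun n : ULift.{u} ℕ => a n.down)
        (by rw [Cardinal.mk_uLift, Cardinal.mk_denumerable]; simpa using hκ)
      obtain ⟨y, hy⟩ := exists_isLUB (Set.range a) ⟨b, by rintro t ⟨n, rfl⟩; exact hb ⟨n⟩⟩
      have hxy : x < y := lt_of_lt_of_le hax (hy.1 ⟨0, rfl⟩)
      refine ⟨y, ⟨⟨x, hxy⟩, ?_⟩, hxy⟩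
      intro β hβ
      obtain ⟨t, ⟨n, rfl⟩, hβt⟩ := lub_cofinal hy hβ
      have h1 : g β < a (n + 1) := by
        have h2 := (hF (a n)).2 β hβt
        have h3 : a (n + 1) = F (a n) := by
          simp only [a, Function.iterate_succ_apply']
        rw [h3]
        exact h2
      exact lt_of_lt_of_le h1 (hy.1 ⟨n + 1, rfl⟩)
    obtain ⟨δ, hδS, hδC⟩ := hss C hclosed hunb
    have hlim : ∀ γ, γ < δ → ∃ η, γ < η ∧ η < δ :=
      fun γ hγ => ⟨g γ, (hg γ).1, hδC.2 γ hγ⟩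
    have hbd : ∀ σ : K κ → Bool, (c.E δ σ).1 ≤ δ :=
      fun σ => c.level_le_of_limit hδC.1 hlim σ
        (fun β hβ => (lt_trans ((hg β).2 (hsmall β) σ) (hδC.2 β hβ)).le)
    have hcount := c.count hbd
    rw [mk_bool_arrow] at hcount
    exact absurd (hcount.trans hδS) (not_le.2 (Cardinal.cantor _))
  · -- κ not inaccessible
    have hnsl : ¬ κ.IsStrongLimit := fun h => hin ⟨hκ, hreg.cof_ord.ge, h.isStrongPrelimit⟩
    have hex : ∃ ν : Cardinal.{u}, κ ≤ 2 ^ ν ∧ ν < κ := by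
      have hnsl' : ¬ κ.IsStrongPrelimit := fun h => hnsl ⟨(Cardinal.aleph0_pos.trans hκ).ne', h⟩
      obtain ⟨ν, hν1, hν2⟩ := Cardinal.not_isStrongPrelimit_iff.1 hnsl'
      exact ⟨ν, hν2, hν1⟩
    obtain ⟨ν, hν1, hν2⟩ := hex
    set S : Set Cardinal.{u} := {m | κ ≤ 2 ^ m} with hS
    have hSne : S.Nonempty := ⟨ν, hν1⟩
    set μ := Cardinal.lt_wf.min S hSne with hμ
    have hμS : κ ≤ 2 ^ μ := Cardinal.lt_wf.min_mem S hSne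
    have hμν : μ ≤ ν := not_lt.1 (Cardinal.lt_wf.not_lt_min S hν1)
    have hμκ : μ < κ := lt_of_le_of_lt hμν hν2
    have hμinf : ℵ₀ ≤ μ := by
      by_contra h
      have h2 : (2 : Cardinal) ^ μ < ℵ₀ :=
        Cardinal.power_lt_aleph0 (Cardinal.nat_lt_aleph0 2) (not_le.1 h)
      exact absurd (lt_of_le_of_lt hμS h2) (not_lt.2 hκ.le)
    have hμmin : ∀ x : Cardinal, x < μ → 2 ^ x < κ := by
      intro x hx
      by_contra hc
      exact Cardinal.lt_wf.not_lt_min S (not_lt.1 hc) hx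
    set e := (Ordinal.ToType.mk (o := κ.ord)) with he
    have hords : μ.ord < κ.ord := Cardinal.ord_lt_ord.2 hμκ
    set lam : K κ := e ⟨μ.ord, hords⟩ with hlam
    have htypein : ((e.symm lam : Set.Iio κ.ord) : Ordinal) = μ.ord := by
      rw [hlam, e.symm_apply_apply]
    have hcardIio : ∀ β : K κ, #{i : K κ // i < β} =
        ((e.symm β : Set.Iio κ.ord) : Ordinal).card :=
      fun β => (@Ordinal.card_typein (K κ) (· < ·) isWellOrder_lt β).symm
    have hmkIio : #{i : K κ // i < lam} = μ := by
      rw [hcardIio lam, htypein, Cardinal.card_ord]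
    have hord_lim : Order.IsSuccLimit μ.ord := Cardinal.isSuccLimit_ord hμinf
    have hlt_iff : ∀ β γ : K κ, β < γ ↔
        ((e.symm β : Set.Iio κ.ord) : Ordinal) < ((e.symm γ : Set.Iio κ.ord) : Ordinal) := by
      intro β γ
      exact ⟨fun h => Subtype.coe_lt_coe.2 (e.symm.lt_iff_lt.2 h),
        fun h => e.symm.lt_iff_lt.1 (Subtype.coe_lt_coe.1 h)⟩
    have hsm : ∀ β : K κ, β < lam → 2 ^ #{i : K κ // i < β} < κ := by
      intro β hβ
      apply hμmin
      rw [hcardIio β, ← Cardinal.lt_ord, ← htypein]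
      exact (hlt_iff β lam).1 hβ
    have h1lam : ∃ ξ : K κ, ξ < lam := by
      refine ⟨e ⟨0, mem_Iio.2 (lt_trans hord_lim.pos hords)⟩, ?_⟩
      rw [hlt_iff, hlam, e.symm_apply_apply, e.symm_apply_apply]
      exact hord_lim.pos
    have h2lam : ∀ γ, γ < lam → ∃ η, γ < η ∧ η < lam := by
      intro γ hγ
      have ht : ((e.symm γ : Set.Iio κ.ord) : Ordinal) < μ.ord := by
        rw [← htypein]; exact (hlt_iff γ lam).1 hγ
      have hsucc : Order.succ ((e.symm γ : Set.Iio κ.ord) : Ordinal) < μ.ord :=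
        hord_lim.succ_lt ht
      refine ⟨e ⟨_, mem_Iio.2 (hsucc.trans hords)⟩, ?_, ?_⟩
      · rw [hlt_iff, e.symm_apply_apply]
        exact Order.lt_succ _
      · rw [hlt_iff, hlam, e.symm_apply_apply, e.symm_apply_apply]
        exact hsucc
    obtain ⟨d, hd⟩ := bdd_of_small hreg (fun ξ : {ξ : K κ // ξ < lam} => g ξ.1) (mk_Iio_lt lam)
    have hbd : ∀ σ : K κ → Bool, (c.E lam σ).1 ≤ d := by
      intro σ
      apply c.level_le_of_limit h1lam h2lam σ
      intro β hβ
      exact (lt_of_lt_of_le ((hg β).2 (hsm β hβ) σ) (hd ⟨β, hβ⟩)).le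
    have hcount := c.count hbd
    rw [mk_bool_arrow, hmkIio] at hcount
    exact absurd (le_trans hμS hcount) (not_le.2 (hT.2.1 d).2)


end GBaire
end
end
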